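/- arXiv:2402.08248 — 5 statements merged into one kernel-verified Lean document; each statement's English description precedes it below -/
import Mathlib

section
/- Let P_n be the path graph on n ≥ 3 vertices. Then RL1(P_n) = 12n − 22, RL2(P_n) = 4n − 6, RL3(P_n) = 4n − 6, and RL4(P_n) = 4. -/
open Finset SimpleGraph

variable {V : Type*}

/-- The degree of a vertex, as a real number. -/
noncomputable def deg [Fintype V] (G : SimpleGraph V) (v : V) : ℝ :=
  haveI := Classical.decEq V
  haveI : DecidableRel G.Adj := Classical.decRel _
  (G.degree v : ℝ)

/-- Sum of a symmetric function of the two endpoints, over the edges of `G`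
(each edge counted once). -/
noncomputable def edgeSum [Fintype V] (G : SimpleGraph V)
    (f : V → V → ℝ) (hf : ∀ u v, f u v = f v u) : ℝ :=
  haveI := Classical.decEq V
  haveI : DecidableRel G.Adj := Classical.decRel _
  ∑ e ∈ G.edgeFinset, Sym2.lift ⟨f, hf⟩ e

/-- The first Rehan–Lanel index: `RL₁(G) = Σ_{uv∈E(G)} (d(u)² + d(v)² + d(u)d(v))`. -/
noncomputable def RL1 [Fintype V] (G : SimpleGraph V) : ℝ :=
  edgeSum G (fun u v => deg G u ^ 2 + deg G v ^ 2 + deg G u * deg G v)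
    (fun u v => by ring)

/-- The second Rehan–Lanel index: `RL₂(G) = Σ_{uv∈E(G)} (d(u)² + d(v)² − d(u)d(v))`. -/
noncomputable def RL2 [Fintype V] (G : SimpleGraph V) : ℝ :=
  edgeSum G (fun u v => deg G u ^ 2 + deg G v ^ 2 - deg G u * deg G v)
    (fun u v => by ring)

/-- The third Rehan–Lanel index: `RL₃(G) = Σ_{uv∈E(G)} (|d(u) − d(v)| + d(u)d(v))`. -/
noncomputable def RL3 [Fintype V] (G : SimpleGraph V) : ℝ :=
  edgeSum G (fun u v => |deg G u - deg G v| + deg G u * deg G v)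
    (fun u v => by rw [abs_sub_comm]; ring)

/-- The fourth Rehan–Lanel index: `RL₄(G) = Σ_{uv∈E(G)} |d(u) − d(v)|·d(u)d(v)`. -/
noncomputable def RL4 [Fintype V] (G : SimpleGraph V) : ℝ :=
  edgeSum G (fun u v => |deg G u - deg G v| * (deg G u * deg G v))
    (fun u v => by rw [abs_sub_comm]; ring)

open Fin.NatCast

lemma deg_pathGraph (n : ℕ) (v : Fin n) :
    deg (pathGraph n) v =
      (if 0 < v.val then 1 else 0) + (if v.val + 1 < n then 1 else 0) := by
  classical
  unfold deg
  rw [show (pathGraph n).degree v = ((univ : Finset (Fin n)).filter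
      (fun u => (pathGraph n).Adj v u)).card by
    rw [← SimpleGraph.neighborFinset_eq_filter]; rfl]
  rw [Finset.card_filter]
  push_cast
  simp only [pathGraph_adj]
  rw [Fin.sum_univ_eq_sum_range (fun i => if v.val + 1 = i ∨ i + 1 = v.val then (1:ℝ) else 0)]
  have hsplit : ∀ i : ℕ, (if v.val + 1 = i ∨ i + 1 = v.val then (1:ℝ) else 0) =
      (if v.val + 1 = i then 1 else 0) + (if i + 1 = v.val then 1 else 0) := by
    intro i
    by_cases h1 : v.val + 1 = i <;> by_cases h2 : i + 1 = v.val <;>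
      simp [h1, h2] <;> omega
  simp only [hsplit]
  rw [Finset.sum_add_distrib, Finset.sum_ite_eq]
  have h2 : ∀ i : ℕ, (if i + 1 = v.val then (1:ℝ) else 0) =
      if (0 < v.val ∧ v.val - 1 = i) then 1 else 0 := by
    intro i; congr 1; simp only [eq_iff_iff]; omega
  simp only [h2, ite_and]
  have hv := v.isLt
  by_cases h0 : 0 < v.val <;>
    simp [h0, Finset.mem_range, Finset.sum_ite_eq, show v.val - 1 < n by omega, add_comm]

lemma edgeSum_pathGraph (m : ℕ) (f : Fin (m+2) → Fin (m+2) → ℝ)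
    (hf : ∀ u v, f u v = f v u) :
    edgeSum (pathGraph (m+2)) f hf =
      ∑ i ∈ Finset.range (m+1), f (i : Fin (m+2)) ((i+1 : ℕ) : Fin (m+2)) := by
  classical
  unfold edgeSum
  refine (Finset.sum_bij
    (fun (i : ℕ) (hi : i ∈ Finset.range (m+1)) =>
      s((i : Fin (m+2)), ((i+1 : ℕ) : Fin (m+2)))) ?_ ?_ ?_ ?_).symm
  · intro i hi
    rw [Finset.mem_range] at hi
    rw [SimpleGraph.mem_edgeFinset, SimpleGraph.mem_edgeSet, pathGraph_adj]
    left
    rw [Fin.val_cast_of_lt (by omega), Fin.val_cast_of_lt (by omega)]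
  · intro i hi j hj h
    rw [Finset.mem_range] at hi hj
    rw [Sym2.eq_iff] at h
    rcases h with ⟨h1, h2⟩ | ⟨h1, h2⟩ <;>
    · have e1 := congrArg Fin.val h1
      have e2 := congrArg Fin.val h2
      rw [Fin.val_cast_of_lt (by omega), Fin.val_cast_of_lt (by omega)] at e1 e2
      omega
  · intro e he
    induction e with
    | h u v =>
      rw [SimpleGraph.mem_edgeFinset, SimpleGraph.mem_edgeSet, pathGraph_adj] at he
      have hu := u.isLt
      have hv := v.isLt
      rcases he with h | h
      · refine ⟨u.val, Finset.mem_range.mpr (by omega), ?_⟩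
        show s(((u.val : ℕ) : Fin (m+2)), ((u.val + 1 : ℕ) : Fin (m+2))) = s(u, v)
        have h1 : ((u.val : ℕ) : Fin (m+2)) = u :=
          Fin.ext (Fin.val_cast_of_lt hu)
        have h2 : ((u.val + 1 : ℕ) : Fin (m+2)) = v :=
          Fin.ext (by rw [Fin.val_cast_of_lt (by omega)]; omega)
        rw [h1, h2]
      · refine ⟨v.val, Finset.mem_range.mpr (by omega), ?_⟩
        show s(((v.val : ℕ) : Fin (m+2)), ((v.val + 1 : ℕ) : Fin (m+2))) = s(u, v)
        have h1 : ((v.val : ℕ) : Fin (m+2)) = v :=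
          Fin.ext (Fin.val_cast_of_lt hv)
        have h2 : ((v.val + 1 : ℕ) : Fin (m+2)) = u :=
          Fin.ext (by rw [Fin.val_cast_of_lt (by omega)]; omega)
        rw [h1, h2, Sym2.eq_swap]
  · intro i hi
    rw [Sym2.lift_mk]

lemma edgeSum_path_eval (m : ℕ) (g : ℝ → ℝ → ℝ)
    (hf : ∀ u v : Fin (m+1+2),
      g (deg (pathGraph (m+1+2)) u) (deg (pathGraph (m+1+2)) v) =
        g (deg (pathGraph (m+1+2)) v) (deg (pathGraph (m+1+2)) u)) :
    edgeSum (pathGraph (m+1+2))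
        (fun u v => g (deg (pathGraph (m+1+2)) u) (deg (pathGraph (m+1+2)) v)) hf =
      g 1 2 + m * g 2 2 + g 2 1 := by
  have hd : ∀ i : ℕ, i < m + 3 → deg (pathGraph (m+1+2)) ((i : ℕ) : Fin (m+1+2)) =
      (if 0 < i then 1 else 0) + (if i + 1 < m + 3 then 1 else 0) := by
    intro i hi
    rw [deg_pathGraph, Fin.val_cast_of_lt (by omega)]
  have hd0 : deg (pathGraph (m+1+2)) ((0 : ℕ) : Fin (m+1+2)) = 1 := by
    rw [hd 0 (by omega)]; norm_num
  have hdlast : deg (pathGraph (m+1+2)) ((m + 1 + 1 : ℕ) : Fin (m+1+2)) = 1 := by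
    rw [hd (m+1+1) (by omega)]; norm_num
  have hdmid : ∀ i : ℕ, 0 < i → i < m + 2 →
      deg (pathGraph (m+1+2)) ((i : ℕ) : Fin (m+1+2)) = 2 := by
    intro i h1 h2
    rw [hd i (by omega), if_pos h1, if_pos (by omega)]; norm_num
  rw [edgeSum_pathGraph (m+1)]
  rw [Finset.sum_range_succ, Finset.sum_range_succ']
  have hmid : ∀ i ∈ Finset.range m,
      g (deg (pathGraph (m+1+2)) ((i + 1 : ℕ) : Fin (m+1+2)))
        (deg (pathGraph (m+1+2)) ((i + 1 + 1 : ℕ) : Fin (m+1+2))) = g 2 2 := by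
    intro i hi
    rw [Finset.mem_range] at hi
    rw [hdmid (i+1) (by omega) (by omega), hdmid (i+2) (by omega) (by omega)]
  rw [Finset.sum_congr rfl hmid, Finset.sum_const, Finset.card_range, nsmul_eq_mul]
  simp only [Nat.zero_add]
  rw [hd0, hdmid 1 (by omega) (by omega), hdmid (m+1) (by omega) (by omega), hdlast]
  ring

/-- For the path graph `Pₙ` on `n ≥ 3` vertices:
`RL₁ = 12n − 22`, `RL₂ = 4n − 6`, `RL₃ = 4n − 6`, `RL₄ = 4`. -/
theorem RL_pathGraph (n : ℕ) (hn : 3 ≤ n) :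
    RL1 (SimpleGraph.pathGraph n) = 12 * n - 22 ∧
      RL2 (SimpleGraph.pathGraph n) = 4 * n - 6 ∧
      RL3 (SimpleGraph.pathGraph n) = 4 * n - 6 ∧
      RL4 (SimpleGraph.pathGraph n) = 4 := by
  obtain ⟨m, rfl⟩ : ∃ m, n = m + 1 + 2 := ⟨n - 3, by omega⟩
  refine ⟨?_, ?_, ?_, ?_⟩
  · exact (edgeSum_path_eval m (fun a b => a ^ 2 + b ^ 2 + a * b)
      (fun u v => by ring)).trans (by push_cast; norm_num; ring)
  · exact (edgeSum_path_eval m (fun a b => a ^ 2 + b ^ 2 - a * b)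
      (fun u v => by ring)).trans (by push_cast; norm_num; ring)
  · exact (edgeSum_path_eval m (fun a b => |a - b| + a * b)
      (fun u v => by rw [abs_sub_comm]; ring)).trans (by push_cast; norm_num; ring)
  · exact (edgeSum_path_eval m (fun a b => |a - b| * (a * b))
      (fun u v => by rw [abs_sub_comm]; ring)).trans (by push_cast; norm_num)
end

section
/- Let G be an r-regular simple graph on n vertices with 2 ≤ r < n. Then BRL1(G) = 6nr(r−1)^2/(n−r)^2, BRL2(G) = 2nr(r−1)^2/(n−r)^2, BRL3(G) = 2nr(r−1)^2/(n−r)^2, and BRL4(G) = 0. -/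
open Finset SimpleGraph

variable {V : Type*}

/-- The Banhatti degree of the endpoint `u` of an edge `uv`:
`B(u) = (d(u) + d(v) − 2)/(n − d(u))` where `n` is the number of vertices. -/
noncomputable def bdeg [Fintype V] (G : SimpleGraph V) (u v : V) : ℝ :=
  (deg G u + deg G v - 2) / ((Fintype.card V : ℝ) - deg G u)

/-- The first Banhatti Rehan–Lanel index:
`BRL₁(G) = Σ_{uv∈E(G)} (B(u)² + B(v)² + B(u)B(v))`. -/
noncomputable def BRL1 [Fintype V] (G : SimpleGraph V) : ℝ :=
  edgeSum G (fun u v => bdeg G u v ^ 2 + bdeg G v u ^ 2 + bdeg G u v * bdeg G v u)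
    (fun u v => by ring)

/-- The second Banhatti Rehan–Lanel index:
`BRL₂(G) = Σ_{uv∈E(G)} (B(u)² + B(v)² − B(u)B(v))`. -/
noncomputable def BRL2 [Fintype V] (G : SimpleGraph V) : ℝ :=
  edgeSum G (fun u v => bdeg G u v ^ 2 + bdeg G v u ^ 2 - bdeg G u v * bdeg G v u)
    (fun u v => by ring)

/-- The third Banhatti Rehan–Lanel index:
`BRL₃(G) = Σ_{uv∈E(G)} (|B(u) − B(v)| + B(u)B(v))`. -/
noncomputable def BRL3 [Fintype V] (G : SimpleGraph V) : ℝ :=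
  edgeSum G (fun u v => |bdeg G u v - bdeg G v u| + bdeg G u v * bdeg G v u)
    (fun u v => by rw [abs_sub_comm]; ring)

/-- The fourth Banhatti Rehan–Lanel index:
`BRL₄(G) = Σ_{uv∈E(G)} |B(u) − B(v)|·B(u)B(v)`. -/
noncomputable def BRL4 [Fintype V] (G : SimpleGraph V) : ℝ :=
  edgeSum G (fun u v => |bdeg G u v - bdeg G v u| * (bdeg G u v * bdeg G v u))
    (fun u v => by rw [abs_sub_comm]; ring)

/-- For an `r`-regular simple graph `G` on `n` vertices with `2 ≤ r < n`:
`BRL₁(G) = 6nr(r−1)²/(n−r)²`, `BRL₂(G) = 2nr(r−1)²/(n−r)²`,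
`BRL₃(G) = 2nr(r−1)²/(n−r)²`, and `BRL₄(G) = 0`. -/
theorem BRL_of_regular {V : Type*} [Fintype V] (G : SimpleGraph V) (n r : ℕ)
    (hn : Fintype.card V = n) (hr : 2 ≤ r) (hrn : r < n)
    (hreg : ∀ v : V, deg G v = r) :
    BRL1 G = 6 * n * r * ((r : ℝ) - 1) ^ 2 / ((n : ℝ) - r) ^ 2 ∧
      BRL2 G = 2 * n * r * ((r : ℝ) - 1) ^ 2 / ((n : ℝ) - r) ^ 2 ∧
      BRL3 G = 2 * n * r * ((r : ℝ) - 1) ^ 2 / ((n : ℝ) - r) ^ 2 ∧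
      BRL4 G = 0 := by
  haveI := Classical.decEq V
  haveI : DecidableRel G.Adj := Classical.decRel _
  have hrn' : ((r : ℝ)) < n := by exact_mod_cast hrn
  have hne : ((n : ℝ) - r) ≠ 0 := sub_ne_zero_of_ne (ne_of_lt hrn').symm
  set B : ℝ := ((r : ℝ) + r - 2) / ((n : ℝ) - r) with hBdef
  have hB : ∀ u v : V, bdeg G u v = B := by
    intro u v
    simp [bdeg, hreg, hn, hBdef]
  have hdeg : ∀ v : V, G.degree v = r := by
    intro v
    have h := hreg v
    unfold deg at h
    have h2 : ((G.degree v : ℝ)) = r := by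
      convert h using 2 <;> congr!
    exact_mod_cast h2
  have hcard : (G.edgeFinset.card : ℝ) * 2 = (n : ℝ) * r := by
    have h2 : ∑ v : V, G.degree v = 2 * G.edgeFinset.card :=
      SimpleGraph.sum_degrees_eq_twice_card_edges G
    have h3 : ∑ v : V, G.degree v = n * r := by
      simp [hdeg, hn, Finset.sum_const, mul_comm]
    have h4 : 2 * G.edgeFinset.card = n * r := h2 ▸ h3
    have := congrArg (fun k : ℕ => (k : ℝ)) h4
    push_cast at this
    linarith
  have key : ∀ (f : V → V → ℝ) (hf : ∀ u v, f u v = f v u) (c : ℝ),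
      (∀ u v : V, f u v = c) →
      edgeSum G f hf = (n : ℝ) * r * c / 2 := by
    intro f hf c h
    unfold edgeSum
    have hall : ∀ (e : Sym2 V), Sym2.lift ⟨f, hf⟩ e = c := by
      intro e
      induction e using Sym2.ind with
      | _ u v => simpa using h u v
    rw [Finset.sum_eq_card_nsmul (fun e _ => hall e), nsmul_eq_mul]
    have target : ((G.edgeFinset.card : ℝ)) * c = (n : ℝ) * r * c / 2 := by
      rw [← hcard]; ring
    convert target using 3 <;> congr!
  refine ⟨?_, ?_, ?_, ?_⟩
  · rw [show BRL1 G = (n : ℝ) * r * (3 * B ^ 2) / 2 from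
      key _ _ _ (fun u v => by simp only [hB]; ring)]
    rw [hBdef]
    field_simp
    ring
  · rw [show BRL2 G = (n : ℝ) * r * (B ^ 2) / 2 from
      key _ _ _ (fun u v => by simp only [hB]; ring)]
    rw [hBdef]
    field_simp
    ring
  · rw [show BRL3 G = (n : ℝ) * r * (B ^ 2) / 2 from
      key _ _ _ (fun u v => by simp only [hB, sub_self, abs_zero]; ring)]
    rw [hBdef]
    field_simp
    ring
  · rw [show BRL4 G = (n : ℝ) * r * 0 / 2 from
      key _ _ _ (fun u v => by simp only [hB, sub_self, abs_zero]; ring)]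
    ring
end

section
/- Let P_n be the path graph on n ≥ 3 vertices. Then BRL1(P_n) = [2(n−1)^2 + 2(n−2)^2 + 2(n−1)(n−2) + 12(n−1)^2(n−3)] / [(n−1)^2 (n−2)^2] and BRL2(P_n) = [2(n−1)^2 + 2(n−2)^2 − 2(n−1)(n−2) + 4(n−1)^2(n−3)] / [(n−1)^2 (n−2)^2]. -/
open Finset SimpleGraph

variable {V : Type*}

lemma pathGraph_degree_eq {n : ℕ} (hn : 2 ≤ n) (v : Fin n)
    [DecidableRel (SimpleGraph.pathGraph n).Adj] :
    (SimpleGraph.pathGraph n).degree v = if v.val = 0 ∨ v.val = n - 1 then 1 else 2 := by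
  classical
  rw [SimpleGraph.degree, SimpleGraph.neighborFinset_eq_filter]
  by_cases h0 : v.val = 0
  · have h : Finset.univ.filter ((SimpleGraph.pathGraph n).Adj v) = {(⟨1, by omega⟩ : Fin n)} := by
      ext w
      simp only [Finset.mem_filter, Finset.mem_univ, true_and, Finset.mem_singleton,
        pathGraph_adj, Fin.ext_iff]
      omega
    rw [h]
    simp [h0]
  · by_cases h1 : v.val = n - 1
    · have h : Finset.univ.filter ((SimpleGraph.pathGraph n).Adj v)
          = {(⟨n - 2, by omega⟩ : Fin n)} := by
        ext w
        have := w.isLt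
        simp only [Finset.mem_filter, Finset.mem_univ, true_and, Finset.mem_singleton,
          pathGraph_adj, Fin.ext_iff]
        omega
      rw [h]
      simp [h1]
    · have hlt := v.isLt
      have h : Finset.univ.filter ((SimpleGraph.pathGraph n).Adj v) =
          {(⟨v.val + 1, by omega⟩ : Fin n), (⟨v.val - 1, by omega⟩ : Fin n)} := by
        ext w
        simp only [Finset.mem_filter, Finset.mem_univ, true_and, Finset.mem_insert,
          Finset.mem_singleton, pathGraph_adj, Fin.ext_iff]
        omega
      rw [h]
      rw [Finset.card_insert_of_notMem (by simp [Fin.ext_iff]; omega)]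
      simp [h0, h1]

lemma pathGraph_edgeFinset (m : ℕ) [Fintype (SimpleGraph.pathGraph (m+1)).edgeSet] :
    (SimpleGraph.pathGraph (m+1)).edgeFinset =
      Finset.univ.map ⟨fun i : Fin m => s(i.castSucc, i.succ), by
        refine @id (Function.Injective _) ?_
        intro i j h
        rw [Sym2.eq_iff] at h
        rcases h with ⟨h1, _⟩ | ⟨h1, h2⟩
        · exact Fin.castSucc_inj.mp h1
        · apply_fun Fin.val at h1 h2
          simp [Fin.ext_iff] at h1 h2 ⊢
          omega⟩ := by
  ext e
  induction e using Sym2.ind with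
  | _ u v =>
    simp only [SimpleGraph.mem_edgeFinset, SimpleGraph.mem_edgeSet, pathGraph_adj,
      Finset.mem_map, Finset.mem_univ, true_and, Function.Embedding.coeFn_mk, Sym2.eq_iff]
    constructor
    · rintro (h | h)
      · exact ⟨⟨u.val, by omega⟩, Or.inl ⟨by simp [Fin.ext_iff], by simp [Fin.ext_iff]; omega⟩⟩
      · exact ⟨⟨v.val, by omega⟩, Or.inr ⟨by simp [Fin.ext_iff], by simp [Fin.ext_iff]; omega⟩⟩
    · rintro ⟨i, ⟨h1, h2⟩ | ⟨h1, h2⟩⟩ <;>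
        [left; right] <;>
        · apply_fun Fin.val at h1 h2
          simp at h1 h2
          omega

lemma edgeSum_path (m : ℕ) (f : Fin (m+1) → Fin (m+1) → ℝ) (hf : ∀ u v, f u v = f v u) :
    edgeSum (SimpleGraph.pathGraph (m+1)) f hf = ∑ i : Fin m, f i.castSucc i.succ := by
  classical
  unfold edgeSum
  rw [pathGraph_edgeFinset, Finset.sum_map]
  simp

lemma hdeg1 (k : ℕ) (i : Fin (k+2)) :
    deg (SimpleGraph.pathGraph (k+2+1)) i.castSucc = if i.val = 0 then 1 else 2 := by
  have hi := i.isLt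
  unfold deg
  rw [pathGraph_degree_eq (by omega)]
  by_cases h : i.val = 0
  · rw [if_pos (Or.inl (by simp only [Fin.coe_castSucc]; omega)), if_pos h]; norm_num
  · rw [if_neg (by simp only [Fin.coe_castSucc]; omega), if_neg h]; norm_num

lemma hdeg2 (k : ℕ) (i : Fin (k+2)) :
    deg (SimpleGraph.pathGraph (k+2+1)) i.succ = if i.val = k+1 then 1 else 2 := by
  have hi := i.isLt
  unfold deg
  rw [pathGraph_degree_eq (by omega)]
  by_cases h : i.val = k+1
  · rw [if_pos (Or.inr (by simp only [Fin.val_succ]; omega)), if_pos h]; norm_num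
  · rw [if_neg (by simp only [Fin.val_succ]; omega), if_neg h]; norm_num

lemma sum_range_split (k : ℕ) (F : ℕ → ℝ) (C : ℝ) (hC : ∀ i, 0 < i → i < k + 1 → F i = C) :
    ∑ a ∈ Finset.range (k+2), F a = F 0 + k * C + F (k+1) := by
  rw [Finset.sum_range_succ, Finset.sum_range_succ']
  have h : ∑ i ∈ Finset.range k, F (i+1) = k * C := by
    rw [Finset.sum_congr rfl (fun i hi => hC (i+1) (by omega)
      (by rw [Finset.mem_range] at hi; omega))]
    simp [mul_comm]
  rw [h]; ring

lemma path_bdeg_sum (k : ℕ) (g : ℝ → ℝ → ℝ)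
    (f : Fin (k+2+1) → Fin (k+2+1) → ℝ) (hf : ∀ u v, f u v = f v u)
    (hgs : ∀ x y, g x y = g y x)
    (hfg : ∀ u v, f u v = g (bdeg (SimpleGraph.pathGraph (k+2+1)) u v)
      (bdeg (SimpleGraph.pathGraph (k+2+1)) v u)) :
    edgeSum (SimpleGraph.pathGraph (k+2+1)) f hf =
      2 * g (1/((k:ℝ)+2)) (1/((k:ℝ)+1)) + k * g (2/((k:ℝ)+1)) (2/((k:ℝ)+1)) := by
  rw [edgeSum_path]
  have hB : ∀ i : Fin (k+2), f i.castSucc i.succ =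
      (fun a : ℕ => if a = 0 then g (1/((k:ℝ)+2)) (1/((k:ℝ)+1))
        else if a = k+1 then g (1/((k:ℝ)+1)) (1/((k:ℝ)+2))
        else g (2/((k:ℝ)+1)) (2/((k:ℝ)+1))) i.val := by
    intro i
    rw [hfg]
    simp only [bdeg, Fintype.card_fin, hdeg1, hdeg2]
    by_cases h0 : i.val = 0 <;> by_cases h1 : i.val = k+1
    · omega
    · simp only [if_pos h0, if_neg h1]
      push_cast
      congr 1 <;> ring
    · simp only [if_neg h0, if_pos h1]
      push_cast
      congr 1 <;> ring
    · simp only [if_neg h0, if_neg h1]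
      push_cast
      congr 1 <;> ring
  rw [Finset.sum_congr rfl (fun i _ => hB i),
    Fin.sum_univ_eq_sum_range (fun a : ℕ => if a = 0 then g (1/((k:ℝ)+2)) (1/((k:ℝ)+1))
      else if a = k+1 then g (1/((k:ℝ)+1)) (1/((k:ℝ)+2))
      else g (2/((k:ℝ)+1)) (2/((k:ℝ)+1))) (k+2),
    sum_range_split k _ (g (2/((k:ℝ)+1)) (2/((k:ℝ)+1)))
      (fun i h1 h2 => by simp only [if_neg (by omega : ¬i = 0), if_neg (by omega : ¬i = k+1)])]
  simp only [if_pos rfl, if_neg (Nat.succ_ne_zero k), if_neg (by omega : ¬(0:ℕ) = k+1)]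
  rw [hgs (1/((k:ℝ)+1))]
  simp only [if_true, ite_true]
  ring

/-- For the path graph `Pₙ` on `n ≥ 3` vertices:
`BRL₁(Pₙ) = [2(n−1)² + 2(n−2)² + 2(n−1)(n−2) + 12(n−1)²(n−3)] / [(n−1)²(n−2)²]` and
`BRL₂(Pₙ) = [2(n−1)² + 2(n−2)² − 2(n−1)(n−2) + 4(n−1)²(n−3)] / [(n−1)²(n−2)²]`. -/
theorem BRL_pathGraph (n : ℕ) (hn : 3 ≤ n) :
    BRL1 (SimpleGraph.pathGraph n) =
        (2 * ((n : ℝ) - 1) ^ 2 + 2 * ((n : ℝ) - 2) ^ 2 +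
            2 * ((n : ℝ) - 1) * ((n : ℝ) - 2) + 12 * ((n : ℝ) - 1) ^ 2 * ((n : ℝ) - 3)) /
          (((n : ℝ) - 1) ^ 2 * ((n : ℝ) - 2) ^ 2) ∧
      BRL2 (SimpleGraph.pathGraph n) =
        (2 * ((n : ℝ) - 1) ^ 2 + 2 * ((n : ℝ) - 2) ^ 2 -
            2 * ((n : ℝ) - 1) * ((n : ℝ) - 2) + 4 * ((n : ℝ) - 1) ^ 2 * ((n : ℝ) - 3)) /
          (((n : ℝ) - 1) ^ 2 * ((n : ℝ) - 2) ^ 2) := by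
  obtain ⟨k, rfl⟩ : ∃ k, n = k + 2 + 1 := ⟨n - 3, by omega⟩
  have hk1 : ((k:ℝ) + 1) ≠ 0 := by positivity
  have hk2 : ((k:ℝ) + 2) ≠ 0 := by positivity
  have hne : (((k:ℝ)+2+1) - 1)^2 * (((k:ℝ)+2+1) - 2)^2 ≠ 0 := by
    have e1 : (((k:ℝ)+2+1) - 1)^2 * (((k:ℝ)+2+1) - 2)^2 = ((k:ℝ)+2)^2*((k:ℝ)+1)^2 := by ring
    rw [e1]; positivity
  constructor
  · rw [BRL1, path_bdeg_sum k (fun x y => x^2 + y^2 + x*y) _ _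
      (fun x y => by ring) (fun u v => rfl)]
    push_cast
    rw [eq_div_iff hne]
    field_simp
    ring
  · rw [BRL2, path_bdeg_sum k (fun x y => x^2 + y^2 - x*y) _ _
      (fun x y => by ring) (fun u v => rfl)]
    push_cast
    rw [eq_div_iff hne]
    field_simp
    ring
end

section
/- Let W_n (n ≥ 3) be the wheel graph and let x > 0 be a real number. Then BRL1(W_n, x) = n·x^{48/(n−2)^2} + n·x^{(n+1)^2(n^2−3n+3)/(n−2)^2}, BRL2(W_n, x) = n·x^{16/(n−2)^2} + n·x^{(n+1)^2(n^2−5n+7)/(n−2)^2}, and BRL4(W_n, x) = n + n·x^{(n+1)^3|n−3|/(n−2)^2}. -/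
open Finset SimpleGraph

variable {V : Type*}

/-- The wheel graph `Wₙ`: the join of a single hub vertex (`none`) with the
cycle `Cₙ` (on the vertices `some i`). -/
def wheelGraph (n : ℕ) : SimpleGraph (Option (Fin n)) :=
  SimpleGraph.fromRel (fun u v =>
    u = none ∨ ∃ i j, u = some i ∧ v = some j ∧ (SimpleGraph.cycleGraph n).Adj i j)

/-- The first Banhatti Rehan–Lanel exponential:
`BRL₁(G,x) = Σ_{uv∈E(G)} x^(B(u)² + B(v)² + B(u)B(v))` (real exponentiation). -/
noncomputable def BRL1exp [Fintype V] (G : SimpleGraph V) (x : ℝ) : ℝ :=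
  edgeSum G (fun u v =>
      x ^ (bdeg G u v ^ 2 + bdeg G v u ^ 2 + bdeg G u v * bdeg G v u))
    (fun u v => by congr 1; ring)

/-- The second Banhatti Rehan–Lanel exponential:
`BRL₂(G,x) = Σ_{uv∈E(G)} x^(B(u)² + B(v)² − B(u)B(v))` (real exponentiation). -/
noncomputable def BRL2exp [Fintype V] (G : SimpleGraph V) (x : ℝ) : ℝ :=
  edgeSum G (fun u v =>
      x ^ (bdeg G u v ^ 2 + bdeg G v u ^ 2 - bdeg G u v * bdeg G v u))
    (fun u v => by congr 1; ring)

/-- The fourth Banhatti Rehan–Lanel exponential: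
`BRL₄(G,x) = Σ_{uv∈E(G)} x^(|B(u) − B(v)|·B(u)B(v))` (real exponentiation). -/
noncomputable def BRL4exp [Fintype V] (G : SimpleGraph V) (x : ℝ) : ℝ :=
  edgeSum G (fun u v =>
      x ^ (|bdeg G u v - bdeg G v u| * (bdeg G u v * bdeg G v u)))
    (fun u v => by congr 1; rw [abs_sub_comm]; ring)

lemma wheel_adj_none_some {n : ℕ} (j : Fin n) : (wheelGraph n).Adj none (some j) := by
  simp [wheelGraph, SimpleGraph.fromRel_adj]

lemma wheel_adj_some_some {n : ℕ} {i j : Fin n} :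
    (wheelGraph n).Adj (some i) (some j) ↔ (cycleGraph n).Adj i j := by
  simp only [wheelGraph, SimpleGraph.fromRel_adj]
  constructor
  · rintro ⟨hne, h | h⟩
    · rcases h with h | ⟨a, b, ha, hb, hab⟩
      · exact absurd h (by simp)
      · cases ha; cases hb; exact hab
    · rcases h with h | ⟨a, b, ha, hb, hab⟩
      · exact absurd h (by simp)
      · cases ha; cases hb; exact hab.symm
  · intro h
    exact ⟨by simpa using h.ne, Or.inl (Or.inr ⟨i, j, rfl, rfl, h⟩)⟩

lemma wheel_adj_none_iff {n : ℕ} {v : Option (Fin n)} :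
    (wheelGraph n).Adj none v ↔ v ≠ none := by
  cases v with
  | none => simp
  | some j => simp [wheel_adj_none_some]

lemma wheel_degree_none (n : ℕ) [Fintype ((wheelGraph n).neighborSet none)] :
    (wheelGraph n).degree none = n := by
  classical
  rw [← card_neighborSet_eq_degree]
  have h : (wheelGraph n).neighborSet none = Set.range some := by
    ext v
    cases v <;> simp [mem_neighborSet, wheel_adj_none_iff]
  rw [Fintype.card_congr (Equiv.setCongr h)]
  rw [Set.card_range_of_injective (Option.some_injective _), Fintype.card_fin]

lemma wheel_neighborSet_some {m : ℕ} (i : Fin (m + 3)) :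
    (wheelGraph (m + 3)).neighborSet (some i) = {none, some (i - 1), some (i + 1)} := by
  ext v
  cases v with
  | none =>
    simp [mem_neighborSet, (wheel_adj_none_some (n := m + 3) i).symm.symm,
      ((wheelGraph (m+3)).adj_comm _ _).mp (wheel_adj_none_some i)]
  | some j =>
    simp only [mem_neighborSet, wheel_adj_some_some, Set.mem_insert_iff,
      Set.mem_singleton_iff, Option.some.injEq, reduceCtorEq, false_or]
    have := cycleGraph_neighborSet (n := m + 1) (v := i)
    rw [Set.ext_iff] at this
    have h2 := this j
    simp only [mem_neighborSet, Set.mem_insert_iff, Set.mem_singleton_iff] at h2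
    exact h2

lemma wheel_degree_some {m : ℕ} (i : Fin (m + 3))
    [Fintype ((wheelGraph (m + 3)).neighborSet (some i))] :
    (wheelGraph (m + 3)).degree (some i) = 3 := by
  classical
  rw [← card_neighborSet_eq_degree]
  rw [Fintype.card_congr (Equiv.setCongr (wheel_neighborSet_some i))]
  have h1 : (i : Fin (m + 3)) - 1 ≠ i + 1 := by
    intro h
    have h2 : (2 : Fin (m + 3)) = 0 := by
      calc (2 : Fin (m + 3)) = i + 1 - (i - 1) := by open Fin.CommRing in ring
      _ = 0 := by rw [h]; open Fin.CommRing in ring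
    rw [Fin.ext_iff] at h2
    simp [Nat.mod_eq_of_lt (show 2 < m + 3 by omega)] at h2
  rw [Set.card_insert _ (by simp), Set.card_insert _ (by simp [h1]), Set.card_singleton]

lemma two_ne_zero_fin (m : ℕ) : (2 : Fin (m + 3)) ≠ 0 := by
  simp [Fin.ext_iff, Nat.mod_eq_of_lt (show 2 < m + 3 by omega)]

lemma cycle_adj_succ {m : ℕ} (i : Fin (m + 3)) :
    (cycleGraph (m + 3)).Adj i (i + 1) := by
  have : (cycleGraph (m + 1 + 2)).Adj i (i + 1) := by
    rw [cycleGraph_adj]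
    right; open Fin.CommRing in ring
  exact this

lemma wheel_edgeFinset (m : ℕ) [Fintype (wheelGraph (m + 3)).edgeSet] :
    (wheelGraph (m + 3)).edgeFinset =
      (Finset.univ.image (fun i : Fin (m + 3) => s(some i, some (i + 1)))) ∪
        (Finset.univ.image (fun i : Fin (m + 3) => s(none, some i))) := by
  classical
  ext e
  induction e with
  | _ u v =>
    simp only [mem_edgeFinset, mem_edgeSet, Finset.mem_union, Finset.mem_image,
      Finset.mem_univ, true_and]
    constructor
    · intro h
      match u, v with
      | none, none => exact absurd rfl h.ne
      | none, some j => exact Or.inr ⟨j, rfl⟩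
      | some i, none => exact Or.inr ⟨i, Sym2.eq_swap⟩
      | some i, some j =>
        left
        have hc : (cycleGraph (m + 1 + 2)).Adj i j := wheel_adj_some_some.mp h
        rw [cycleGraph_adj] at hc
        rcases hc with hc | hc
        · refine ⟨j, ?_⟩
          have : i = j + 1 := by rw [sub_eq_iff_eq_add] at hc; rw [hc]; open Fin.CommRing in ring
          rw [this]; exact Sym2.eq_swap
        · refine ⟨i, ?_⟩
          have : j = i + 1 := by rw [sub_eq_iff_eq_add] at hc; rw [hc]; open Fin.CommRing in ring
          rw [this]
    · rintro (⟨i, hi⟩ | ⟨i, hi⟩)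
      · rw [Sym2.eq_iff] at hi
        rcases hi with ⟨h1, h2⟩ | ⟨h1, h2⟩
        · rw [← h1, ← h2]; exact wheel_adj_some_some.mpr (cycle_adj_succ i)
        · rw [← h1, ← h2]; exact (wheel_adj_some_some.mpr (cycle_adj_succ i)).symm
      · rw [Sym2.eq_iff] at hi
        rcases hi with ⟨h1, h2⟩ | ⟨h1, h2⟩
        · rw [← h1, ← h2]; exact wheel_adj_none_some i
        · rw [← h1, ← h2]; exact (wheel_adj_none_some i).symm

lemma rim_inj (m : ℕ) : Function.Injective
    (fun i : Fin (m + 3) => s(some i, some (i + 1)) : Fin (m + 3) → Sym2 (Option (Fin (m + 3)))) := by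
  intro i j h
  simp only [Sym2.eq_iff, Option.some.injEq] at h
  rcases h with ⟨h1, _⟩ | ⟨h1, h2⟩
  · exact h1
  · exfalso
    apply two_ne_zero_fin m
    have h3 : i = i + 2 := by
      nth_rewrite 1 [h1]; rw [← h2]; open Fin.CommRing in ring
    have h4 : i + 0 = i + 2 := by rw [add_zero]; exact h3
    exact (add_left_cancel h4).symm

lemma spoke_inj (m : ℕ) : Function.Injective
    (fun i : Fin (m + 3) => s(none, some i) : Fin (m + 3) → Sym2 (Option (Fin (m + 3)))) := by
  intro i j h
  simp only [Sym2.eq_iff, Option.some.injEq, reduceCtorEq] at h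
  tauto

lemma rim_spoke_disjoint (m : ℕ) :
    Disjoint (Finset.univ.image (fun i : Fin (m + 3) => s(some i, some (i + 1))))
      (Finset.univ.image (fun i : Fin (m + 3) => s(none, some i))) := by
  rw [Finset.disjoint_left]
  rintro e he hs
  simp only [Finset.mem_image, Finset.mem_univ, true_and] at he hs
  obtain ⟨i, hi⟩ := he
  obtain ⟨j, hj⟩ := hs
  rw [← hj, Sym2.eq_iff] at hi
  simp at hi

lemma edgeSum_wheel (m : ℕ) (f : Option (Fin (m + 3)) → Option (Fin (m + 3)) → ℝ)
    (hf : ∀ u v, f u v = f v u) :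
    edgeSum (wheelGraph (m + 3)) f hf =
      (∑ i : Fin (m + 3), f (some i) (some (i + 1))) +
        ∑ i : Fin (m + 3), f none (some i) := by
  unfold edgeSum
  rw [wheel_edgeFinset, Finset.sum_union (rim_spoke_disjoint m),
    Finset.sum_image (fun a _ b _ h => rim_inj m h),
    Finset.sum_image (fun a _ b _ h => spoke_inj m h)]
  simp [Sym2.lift_mk]

lemma deg_wheel_none (m : ℕ) : deg (wheelGraph (m + 3)) none = (m : ℝ) + 3 := by
  unfold deg
  rw [wheel_degree_none]
  push_cast
  ring

lemma deg_wheel_some (m : ℕ) (i : Fin (m + 3)) : deg (wheelGraph (m + 3)) (some i) = 3 := by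
  unfold deg
  rw [wheel_degree_some]
  norm_num

lemma card_wheel (m : ℕ) : (Fintype.card (Option (Fin (m + 3))) : ℝ) = (m : ℝ) + 4 := by
  simp
  ring

lemma bdeg_rim (m : ℕ) (i j : Fin (m + 3)) :
    bdeg (wheelGraph (m + 3)) (some i) (some j) = 4 / ((m : ℝ) + 1) := by
  have hne : (m : ℝ) + 1 ≠ 0 := by positivity
  unfold bdeg
  rw [deg_wheel_some, deg_wheel_some, card_wheel]
  rw [show (3 : ℝ) + 3 - 2 = 4 by ring, show (m : ℝ) + 4 - 3 = (m : ℝ) + 1 by ring]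

lemma bdeg_spoke (m : ℕ) (i : Fin (m + 3)) :
    bdeg (wheelGraph (m + 3)) (some i) none = ((m : ℝ) + 4) / ((m : ℝ) + 1) := by
  unfold bdeg
  rw [deg_wheel_some, deg_wheel_none, card_wheel]
  rw [show (3 : ℝ) + ((m : ℝ) + 3) - 2 = (m : ℝ) + 4 by ring,
    show (m : ℝ) + 4 - 3 = (m : ℝ) + 1 by ring]

lemma bdeg_hub (m : ℕ) (i : Fin (m + 3)) :
    bdeg (wheelGraph (m + 3)) none (some i) = (m : ℝ) + 4 := by
  unfold bdeg
  rw [deg_wheel_none, deg_wheel_some, card_wheel]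
  rw [show (m : ℝ) + 3 + 3 - 2 = (m : ℝ) + 4 by ring,
    show (m : ℝ) + 4 - ((m : ℝ) + 3) = 1 by ring, div_one]

/-- For the wheel graph `Wₙ` (`n ≥ 3`) and a real `x > 0`:
`BRL₁(Wₙ,x) = n·x^(48/(n−2)²) + n·x^((n+1)²(n²−3n+3)/(n−2)²)`,
`BRL₂(Wₙ,x) = n·x^(16/(n−2)²) + n·x^((n+1)²(n²−5n+7)/(n−2)²)`, and
`BRL₄(Wₙ,x) = n + n·x^((n+1)³|n−3|/(n−2)²)`. -/
theorem BRLexp_wheelGraph (n : ℕ) (hn : 3 ≤ n) (x : ℝ) (hx : 0 < x) :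
    BRL1exp (wheelGraph n) x =
        n * x ^ (48 / ((n : ℝ) - 2) ^ 2) +
          n * x ^ (((n : ℝ) + 1) ^ 2 * ((n : ℝ) ^ 2 - 3 * n + 3) / ((n : ℝ) - 2) ^ 2) ∧
      BRL2exp (wheelGraph n) x =
        n * x ^ (16 / ((n : ℝ) - 2) ^ 2) +
          n * x ^ (((n : ℝ) + 1) ^ 2 * ((n : ℝ) ^ 2 - 5 * n + 7) / ((n : ℝ) - 2) ^ 2) ∧
      BRL4exp (wheelGraph n) x =
        n + n * x ^ (((n : ℝ) + 1) ^ 3 * |(n : ℝ) - 3| / ((n : ℝ) - 2) ^ 2) := by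
  obtain ⟨m, rfl⟩ : ∃ m, n = m + 3 := ⟨n - 3, by omega⟩
  have hcast : ((m + 3 : ℕ) : ℝ) = (m : ℝ) + 3 := by push_cast; ring
  have hne : (m : ℝ) + 1 ≠ 0 := by positivity
  have hne2 : ((m + 3 : ℕ) : ℝ) - 2 ≠ 0 := by rw [hcast]; intro h; nlinarith [Nat.cast_nonneg (α := ℝ) m]
  set W := wheelGraph (m + 3)
  refine ⟨?_, ?_, ?_⟩
  · unfold BRL1exp
    rw [edgeSum_wheel]
    have hr : ∀ i : Fin (m + 3),
        x ^ (bdeg W (some i) (some (i + 1)) ^ 2 + bdeg W (some (i + 1)) (some i) ^ 2 +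
          bdeg W (some i) (some (i + 1)) * bdeg W (some (i + 1)) (some i)) =
        x ^ (48 / (((m + 3 : ℕ) : ℝ) - 2) ^ 2) := by
      intro i
      rw [bdeg_rim, bdeg_rim]
      congr 1
      rw [hcast] at hne2 ⊢
      field_simp
      ring
    have hs : ∀ i : Fin (m + 3),
        x ^ (bdeg W none (some i) ^ 2 + bdeg W (some i) none ^ 2 +
          bdeg W none (some i) * bdeg W (some i) none) =
        x ^ ((((m + 3 : ℕ) : ℝ) + 1) ^ 2 * (((m + 3 : ℕ) : ℝ) ^ 2 - 3 * ((m + 3 : ℕ) : ℝ) + 3) /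
          (((m + 3 : ℕ) : ℝ) - 2) ^ 2) := by
      intro i
      rw [bdeg_hub, bdeg_spoke]
      congr 1
      rw [hcast] at hne2 ⊢
      field_simp
      ring
    simp only [hr, hs, Finset.sum_const, Finset.card_univ, Fintype.card_fin, nsmul_eq_mul]
  · unfold BRL2exp
    rw [edgeSum_wheel]
    have hr : ∀ i : Fin (m + 3),
        x ^ (bdeg W (some i) (some (i + 1)) ^ 2 + bdeg W (some (i + 1)) (some i) ^ 2 -
          bdeg W (some i) (some (i + 1)) * bdeg W (some (i + 1)) (some i)) =
        x ^ (16 / (((m + 3 : ℕ) : ℝ) - 2) ^ 2) := by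
      intro i
      rw [bdeg_rim, bdeg_rim]
      congr 1
      rw [hcast] at hne2 ⊢
      field_simp
      ring
    have hs : ∀ i : Fin (m + 3),
        x ^ (bdeg W none (some i) ^ 2 + bdeg W (some i) none ^ 2 -
          bdeg W none (some i) * bdeg W (some i) none) =
        x ^ ((((m + 3 : ℕ) : ℝ) + 1) ^ 2 * (((m + 3 : ℕ) : ℝ) ^ 2 - 5 * ((m + 3 : ℕ) : ℝ) + 7) /
          (((m + 3 : ℕ) : ℝ) - 2) ^ 2) := by
      intro i
      rw [bdeg_hub, bdeg_spoke]
      congr 1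
      rw [hcast] at hne2 ⊢
      field_simp
      ring
    simp only [hr, hs, Finset.sum_const, Finset.card_univ, Fintype.card_fin, nsmul_eq_mul]
  · unfold BRL4exp
    rw [edgeSum_wheel]
    have hr : ∀ i : Fin (m + 3),
        x ^ (|bdeg W (some i) (some (i + 1)) - bdeg W (some (i + 1)) (some i)| *
          (bdeg W (some i) (some (i + 1)) * bdeg W (some (i + 1)) (some i))) = (1 : ℝ) := by
      intro i
      rw [bdeg_rim, bdeg_rim, sub_self, abs_zero, zero_mul, Real.rpow_zero]
    have hs : ∀ i : Fin (m + 3),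
        x ^ (|bdeg W none (some i) - bdeg W (some i) none| *
          (bdeg W none (some i) * bdeg W (some i) none)) =
        x ^ ((((m + 3 : ℕ) : ℝ) + 1) ^ 3 * |((m + 3 : ℕ) : ℝ) - 3| /
          (((m + 3 : ℕ) : ℝ) - 2) ^ 2) := by
      intro i
      rw [bdeg_hub, bdeg_spoke]
      congr 1
      rw [show ((m : ℝ) + 4) - ((m : ℝ) + 4) / ((m : ℝ) + 1) = ((m : ℝ) + 4) * m / ((m : ℝ) + 1) by
        field_simp; ring]
      rw [abs_of_nonneg (by positivity : ((m : ℝ) + 4) * m / ((m : ℝ) + 1) ≥ 0)]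
      rw [show ((m + 3 : ℕ) : ℝ) - 3 = (m : ℝ) by rw [hcast]; ring,
        abs_of_nonneg (Nat.cast_nonneg m)]
      rw [hcast] at hne2 ⊢
      field_simp
      ring
    simp only [hr, hs, Finset.sum_const, Finset.card_univ, Fintype.card_fin, nsmul_eq_mul,
      mul_one]
end

section
/- Let K_{m,n} be the complete bipartite graph with parts of sizes m and n, where 1 ≤ m ≤ n and n ≥ 2. Then RRL1(K_{m,n}) = mn(m^2 + n^2 + mn), RRL2(K_{m,n}) = mn(m^2 + n^2 − mn), RRL3(K_{m,n}) = mn(n − m + mn), and RRL4(K_{m,n}) = m^2 n^2 (n − m). -/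
open Finset SimpleGraph

variable {V : Type*}

/-- The Revan degree of a vertex: `r_G(u) = Δ(G) + δ(G) − d_G(u)`, as a real number. -/
noncomputable def rdeg [Fintype V] (G : SimpleGraph V) (v : V) : ℝ :=
  haveI := Classical.decEq V
  haveI : DecidableRel G.Adj := Classical.decRel _
  (G.maxDegree : ℝ) + (G.minDegree : ℝ) - (G.degree v : ℝ)

/-- The first Revan Rehan–Lanel index:
`RRL₁(G) = Σ_{uv∈E(G)} (r(u)² + r(v)² + r(u)r(v))`. -/
noncomputable def RRL1 [Fintype V] (G : SimpleGraph V) : ℝ :=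
  edgeSum G (fun u v => rdeg G u ^ 2 + rdeg G v ^ 2 + rdeg G u * rdeg G v)
    (fun u v => by ring)

/-- The second Revan Rehan–Lanel index:
`RRL₂(G) = Σ_{uv∈E(G)} (r(u)² + r(v)² − r(u)r(v))`. -/
noncomputable def RRL2 [Fintype V] (G : SimpleGraph V) : ℝ :=
  edgeSum G (fun u v => rdeg G u ^ 2 + rdeg G v ^ 2 - rdeg G u * rdeg G v)
    (fun u v => by ring)

/-- The third Revan Rehan–Lanel index:
`RRL₃(G) = Σ_{uv∈E(G)} (|r(u) − r(v)| + r(u)r(v))`. -/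
noncomputable def RRL3 [Fintype V] (G : SimpleGraph V) : ℝ :=
  edgeSum G (fun u v => |rdeg G u - rdeg G v| + rdeg G u * rdeg G v)
    (fun u v => by rw [abs_sub_comm]; ring)

/-- The fourth Revan Rehan–Lanel index:
`RRL₄(G) = Σ_{uv∈E(G)} |r(u) − r(v)|·r(u)r(v)`. -/
noncomputable def RRL4 [Fintype V] (G : SimpleGraph V) : ℝ :=
  edgeSum G (fun u v => |rdeg G u - rdeg G v| * (rdeg G u * rdeg G v))
    (fun u v => by rw [abs_sub_comm]; ring)


section auxlem
variable (m n : ℕ)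

private lemma cbp_degree_inl [DecidableRel (completeBipartiteGraph (Fin m) (Fin n)).Adj]
    (u : Fin m) : (completeBipartiteGraph (Fin m) (Fin n)).degree (Sum.inl u) = n := by
  simp only [SimpleGraph.degree, SimpleGraph.neighborFinset, Set.toFinset_setOf]
  have : Finset.filter (fun x : Fin m ⊕ Fin n =>
      x.isRight = true) Finset.univ
      = Finset.univ.map ⟨Sum.inr, Sum.inr_injective⟩ := by
    ext x; cases x <;> simp
  simp [this]

private lemma cbp_degree_inr [DecidableRel (completeBipartiteGraph (Fin m) (Fin n)).Adj]
    (v : Fin n) : (completeBipartiteGraph (Fin m) (Fin n)).degree (Sum.inr v) = m := by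
  simp only [SimpleGraph.degree, SimpleGraph.neighborFinset, Set.toFinset_setOf]
  have : Finset.filter (fun x : Fin m ⊕ Fin n =>
      x.isLeft = true) Finset.univ
      = Finset.univ.map ⟨Sum.inl, Sum.inl_injective⟩ := by
    ext x; cases x <;> simp
  simp [this]

private lemma cbp_maxDegree (hm : 1 ≤ m) (hmn : m ≤ n)
    [DecidableRel (completeBipartiteGraph (Fin m) (Fin n)).Adj] :
    (completeBipartiteGraph (Fin m) (Fin n)).maxDegree = n := by
  apply le_antisymm
  · apply SimpleGraph.maxDegree_le_of_forall_degree_le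
    rintro (u | v)
    · rw [cbp_degree_inl]
    · rw [cbp_degree_inr]; exact hmn
  · have := SimpleGraph.degree_le_maxDegree (completeBipartiteGraph (Fin m) (Fin n))
      (Sum.inl ⟨0, hm⟩)
    rwa [cbp_degree_inl] at this

private lemma cbp_minDegree (hm : 1 ≤ m) (hmn : m ≤ n)
    [DecidableRel (completeBipartiteGraph (Fin m) (Fin n)).Adj] :
    (completeBipartiteGraph (Fin m) (Fin n)).minDegree = m := by
  haveI : Nonempty (Fin m ⊕ Fin n) := ⟨Sum.inl ⟨0, hm⟩⟩
  apply le_antisymm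
  · have := SimpleGraph.minDegree_le_degree (completeBipartiteGraph (Fin m) (Fin n))
      (Sum.inr ⟨0, hm.trans hmn⟩)
    rwa [cbp_degree_inr] at this
  · apply SimpleGraph.le_minDegree_of_forall_le_degree
    rintro (u | v)
    · rw [cbp_degree_inl]; exact hmn
    · rw [cbp_degree_inr]

private lemma cbp_card_edges [DecidableRel (completeBipartiteGraph (Fin m) (Fin n)).Adj] :
    (completeBipartiteGraph (Fin m) (Fin n)).edgeFinset.card = m * n := by
  have h := SimpleGraph.sum_degrees_eq_twice_card_edges (completeBipartiteGraph (Fin m) (Fin n))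
  rw [Fintype.sum_sum_type] at h
  simp only [cbp_degree_inl, cbp_degree_inr, Finset.sum_const, Finset.card_univ,
    Fintype.card_fin, smul_eq_mul] at h
  have h2 : 2 * ((completeBipartiteGraph (Fin m) (Fin n)).edgeFinset.card) = 2 * (m * n) := by
    rw [← h]; ring
  exact (Nat.eq_of_mul_eq_mul_left (by norm_num) h2)

end auxlem

section auxlem2
variable (m n : ℕ)

private lemma cbp_edgeSum (f : Fin m ⊕ Fin n → Fin m ⊕ Fin n → ℝ)
    (hf : ∀ u v, f u v = f v u) (c : ℝ) (h : ∀ u v, f (Sum.inl u) (Sum.inr v) = c) :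
    edgeSum (completeBipartiteGraph (Fin m) (Fin n)) f hf = m * n * c := by
  classical
  unfold edgeSum
  rw [Finset.sum_congr rfl (fun e he => ?_), Finset.sum_const, cbp_card_edges, nsmul_eq_mul,
    Nat.cast_mul]
  rw [SimpleGraph.mem_edgeFinset] at he
  induction e using Sym2.ind with
  | _ x y =>
    rw [SimpleGraph.mem_edgeSet] at he
    rcases x with x | x <;> rcases y with y | y <;> simp_all

end auxlem2

/-- For the complete bipartite graph `K_{m,n}` with `1 ≤ m ≤ n`, `n ≥ 2`:
`RRL₁ = mn(m² + n² + mn)`, `RRL₂ = mn(m² + n² − mn)`,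
`RRL₃ = mn(n − m + mn)`, `RRL₄ = m²n²(n − m)`. -/
theorem RRL_completeBipartiteGraph (m n : ℕ) (hm : 1 ≤ m) (hmn : m ≤ n) (hn : 2 ≤ n) :
    RRL1 (completeBipartiteGraph (Fin m) (Fin n)) =
        m * n * ((m : ℝ) ^ 2 + (n : ℝ) ^ 2 + m * n) ∧
      RRL2 (completeBipartiteGraph (Fin m) (Fin n)) =
        m * n * ((m : ℝ) ^ 2 + (n : ℝ) ^ 2 - m * n) ∧
      RRL3 (completeBipartiteGraph (Fin m) (Fin n)) =
        m * n * ((n : ℝ) - m + m * n) ∧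
      RRL4 (completeBipartiteGraph (Fin m) (Fin n)) =
        (m : ℝ) ^ 2 * (n : ℝ) ^ 2 * ((n : ℝ) - m) := by
  classical
  have hri : ∀ u : Fin m, rdeg (completeBipartiteGraph (Fin m) (Fin n)) (Sum.inl u) = m := by
    intro u
    unfold rdeg
    rw [cbp_maxDegree m n hm hmn, cbp_minDegree m n hm hmn, cbp_degree_inl]
    ring
  have hrr : ∀ v : Fin n, rdeg (completeBipartiteGraph (Fin m) (Fin n)) (Sum.inr v) = n := by
    intro v
    unfold rdeg
    rw [cbp_maxDegree m n hm hmn, cbp_minDegree m n hm hmn, cbp_degree_inr]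
    ring
  have habs : |(m : ℝ) - n| = (n : ℝ) - m := by
    rw [abs_of_nonpos (sub_nonpos.mpr (Nat.cast_le.mpr hmn))]; ring
  refine ⟨?_, ?_, ?_, ?_⟩
  · unfold RRL1
    rw [cbp_edgeSum m n _ _ ((m : ℝ) ^ 2 + (n : ℝ) ^ 2 + m * n)
      (fun u v => by rw [hri u, hrr v])]
  · unfold RRL2
    rw [cbp_edgeSum m n _ _ ((m : ℝ) ^ 2 + (n : ℝ) ^ 2 - m * n)
      (fun u v => by rw [hri u, hrr v])]
  · unfold RRL3
    rw [cbp_edgeSum m n _ _ (|(m : ℝ) - n| + m * n)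
      (fun u v => by rw [hri u, hrr v]), habs]
  · unfold RRL4
    rw [cbp_edgeSum m n _ _ (|(m : ℝ) - n| * (m * n))
      (fun u v => by rw [hri u, hrr v]), habs]
    ring
end
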